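/- For every integer x ≥ 2, the function g(x) := (ln x − ln(x−1))/(ln(x+1) − ln x) is strictly decreasing on integers x ≥ 2 and satisfies g(x) ≤ g(2) < 2. -/

import Mathlib

open Real

lemma sinh_lt_mul_cosh {s : ℝ} (hs : 0 < s) : Real.sinh s < s * Real.cosh s := by
  have key : StrictMonoOn (fun t : ℝ => t * Real.cosh t - Real.sinh t) (Set.Ici 0) := by
    apply strictMonoOn_of_deriv_pos (convex_Ici 0)
    · fun_prop
    · intro t ht
      rw [interior_Ici] at ht
      have h1 : HasDerivAt (fun t : ℝ => t * Real.cosh t - Real.sinh t)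
          (1 * Real.cosh t + t * Real.sinh t - Real.cosh t) t :=
        ((hasDerivAt_id t).mul (Real.hasDerivAt_cosh t)).sub (Real.hasDerivAt_sinh t)
      rw [h1.deriv]
      rw [Set.mem_Ioi] at ht
      have := Real.sinh_pos_iff.2 ht
      nlinarith [mul_pos ht this]
  have h0 := key (Set.self_mem_Ici) (Set.mem_Ici.2 hs.le) hs
  simp [Real.sinh_zero, Real.cosh_zero] at h0
  linarith

/-- lower bound: `(q²-p²) < (log q - log p) * (q²+p²)` -/
lemma log_lower {p q : ℝ} (hp : 0 < p) (hpq : p < q) :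
    q ^ 2 - p ^ 2 < (Real.log q - Real.log p) * (q ^ 2 + p ^ 2) := by
  have hq : 0 < q := hp.trans hpq
  have hu : (1 : ℝ) < q / p := (one_lt_div hp).2 hpq
  have hu0 : 0 < q / p := by positivity
  have hs : 0 < Real.log (q / p) := Real.log_pos hu
  have h := sinh_lt_mul_cosh hs
  rw [Real.sinh_log hu0, Real.cosh_log hu0, Real.log_div hq.ne' hp.ne'] at h
  have hinv : (q / p)⁻¹ = p / q := by field_simp
  rw [hinv] at h
  have hpq2 : 0 < p * q := by positivity
  have h3 : q / p - p / q < (Real.log q - Real.log p) * (q / p + p / q) := by linarith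
  have h4 := mul_lt_mul_of_pos_right h3 hpq2
  have e1 : (q / p - p / q) * (p * q) = q * q - p * p := by field_simp
  have e2 : (q / p + p / q) * (p * q) = q * q + p * p := by field_simp
  rw [e1, mul_assoc, e2] at h4
  nlinarith [h4]

/-- upper bound: `(log q - log p)² * (p*q) < (q-p)²` -/
lemma log_upper {p q : ℝ} (hp : 0 < p) (hpq : p < q) :
    (Real.log q - Real.log p) ^ 2 * (p * q) < (q - p) ^ 2 := by
  have hq : 0 < q := hp.trans hpq
  set sp := Real.sqrt p with hsp
  set sq := Real.sqrt q with hsq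
  have hsp0 : 0 < sp := Real.sqrt_pos.2 hp
  have hsq0 : 0 < sq := Real.sqrt_pos.2 hq
  have hsp2 : sp ^ 2 = p := Real.sq_sqrt hp.le
  have hsq2 : sq ^ 2 = q := Real.sq_sqrt hq.le
  have hlt : sp < sq := Real.sqrt_lt_sqrt hp.le hpq
  have hu : (1 : ℝ) < sq / sp := (one_lt_div hsp0).2 hlt
  have hu0 : 0 < sq / sp := by positivity
  have hs : 0 < Real.log (sq / sp) := Real.log_pos hu
  have h := Real.self_lt_sinh_iff.2 hs
  rw [Real.sinh_log hu0] at h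
  have hlogp : Real.log p = 2 * Real.log sp := by
    rw [hsp, Real.log_sqrt hp.le]; ring
  have hlogq : Real.log q = 2 * Real.log sq := by
    rw [hsq, Real.log_sqrt hq.le]; ring
  rw [Real.log_div hsq0.ne' hsp0.ne'] at h
  have hinv : (sq / sp)⁻¹ = sp / sq := by field_simp
  rw [hinv] at h
  -- h : log sq - log sp < (sq/sp - sp/sq)/2
  have key : Real.log q - Real.log p < (q - p) / (sp * sq) := by
    rw [hlogp, hlogq]
    rw [div_sub_div _ _ hsp0.ne' hsq0.ne'] at h
    rw [lt_div_iff₀ (by positivity)]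
    have h' : (Real.log sq - Real.log sp) * (sp * sq * 2) < sq * sq - sp * sp := by
      rw [div_div] at h
      exact (lt_div_iff₀ (by positivity)).1 h
    nlinarith [h', hsp2, hsq2]
  have hpos : 0 < Real.log q - Real.log p := by
    have := Real.log_lt_log hp hpq; linarith
  have hsq' : (sp * sq) ^ 2 = p * q := by rw [mul_pow, hsp2, hsq2]
  calc (Real.log q - Real.log p) ^ 2 * (p * q)
      < ((q - p) / (sp * sq)) ^ 2 * (p * q) := by
        apply mul_lt_mul_of_pos_right _ (by positivity)
        exact pow_lt_pow_left₀ key hpos.le (by norm_num)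
    _ = (q - p) ^ 2 := by
        rw [div_pow, hsq']
        field_simp

set_option maxHeartbeats 1000000 in
lemma main_dec (x : ℕ) (hx : 2 ≤ x) :
    (Real.log ((x : ℝ) + 1) - Real.log (x : ℝ)) /
        (Real.log ((x : ℝ) + 2) - Real.log ((x : ℝ) + 1)) <
      (Real.log (x : ℝ) - Real.log ((x : ℝ) - 1)) /
        (Real.log ((x : ℝ) + 1) - Real.log (x : ℝ)) := by
  have hr : (2 : ℝ) ≤ (x : ℝ) := by exact_mod_cast hx
  set r : ℝ := (x : ℝ) with hrdef
  have h1 : (0 : ℝ) < r - 1 := by linarith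
  have h0 : (0 : ℝ) < r := by linarith
  set a := Real.log (r + 1) - Real.log r with hadef
  set b := Real.log (r + 2) - Real.log (r + 1) with hbdef
  set c := Real.log r - Real.log (r - 1) with hcdef
  have ha : 0 < a := by
    have := Real.log_lt_log h0 (by linarith : r < r + 1); linarith
  have hb : 0 < b := by
    have := Real.log_lt_log (by linarith : (0:ℝ) < r + 1) (by linarith : r + 1 < r + 2); linarith
  have hc : 0 < c := by
    have := Real.log_lt_log h1 (by linarith : r - 1 < r); linarith
  rw [div_lt_div_iff₀ (by linarith) (by linarith)]
  -- a * a < c * b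
  have hA : a ^ 2 * (r * (r + 1)) < (r + 1 - r) ^ 2 := log_upper h0 (by linarith)
  have hB : (r + 2) ^ 2 - (r + 1) ^ 2 < b * ((r + 2) ^ 2 + (r + 1) ^ 2) :=
    log_lower (by linarith) (by linarith)
  have hC : r ^ 2 - (r - 1) ^ 2 < c * (r ^ 2 + (r - 1) ^ 2) :=
    log_lower h1 (by linarith)
  have hB' : (2 * r + 3) < b * (2 * r ^ 2 + 6 * r + 5) := by nlinarith [hB]
  have hC' : (2 * r - 1) < c * (2 * r ^ 2 - 2 * r + 1) := by nlinarith [hC]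
  have hA' : a ^ 2 * (r * (r + 1)) < 1 := by nlinarith [hA]
  have hd1 : (0:ℝ) < 2 * r ^ 2 + 6 * r + 5 := by nlinarith
  have hd2 : (0:ℝ) < 2 * r ^ 2 - 2 * r + 1 := by nlinarith
  have hbc : (2 * r + 3) * (2 * r - 1) <
      (b * c) * ((2 * r ^ 2 + 6 * r + 5) * (2 * r ^ 2 - 2 * r + 1)) := by
    have h6 := mul_lt_mul'' hB' hC' (by linarith) (by linarith)
    have e : b * (2 * r ^ 2 + 6 * r + 5) * (c * (2 * r ^ 2 - 2 * r + 1)) =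
        b * c * ((2 * r ^ 2 + 6 * r + 5) * (2 * r ^ 2 - 2 * r + 1)) := by ring
    linarith [h6, e]
  -- key polynomial: (2r+3)(2r-1) * (r(r+1)) ≥ (2r²+6r+5)(2r²-2r+1) for r ≥ 2
  have hpoly : (2 * r ^ 2 + 6 * r + 5) * (2 * r ^ 2 - 2 * r + 1) <
      (2 * r + 3) * (2 * r - 1) * (r * (r + 1)) := by nlinarith [hr, sq_nonneg (r - 2)]
  have hrr : (0:ℝ) < r * (r + 1) := by positivity
  have hD : (0:ℝ) < (2 * r ^ 2 + 6 * r + 5) * (2 * r ^ 2 - 2 * r + 1) := mul_pos hd1 hd2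
  have k1 : a ^ 2 < 1 / (r * (r + 1)) := (lt_div_iff₀ hrr).2 hA'
  have k2 : 1 / (r * (r + 1)) <
      (2 * r + 3) * (2 * r - 1) / ((2 * r ^ 2 + 6 * r + 5) * (2 * r ^ 2 - 2 * r + 1)) := by
    rw [div_lt_div_iff₀ hrr hD]
    linarith [hpoly]
  have k3 : (2 * r + 3) * (2 * r - 1) / ((2 * r ^ 2 + 6 * r + 5) * (2 * r ^ 2 - 2 * r + 1)) <
      b * c := (div_lt_iff₀ hD).2 hbc
  have : a ^ 2 < b * c := lt_trans (lt_trans k1 k2) k3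
  nlinarith [this]

lemma g2_lt : (Real.log (2 : ℝ) - Real.log (1 : ℝ)) /
    (Real.log (3 : ℝ) - Real.log (2 : ℝ)) < 2 := by
  have h23 : Real.log 2 < Real.log 3 := Real.log_lt_log (by norm_num) (by norm_num)
  rw [Real.log_one, sub_zero, div_lt_iff₀ (by linarith)]
  have h89 : Real.log 8 < Real.log 9 := Real.log_lt_log (by norm_num) (by norm_num)
  have e8 : Real.log 8 = 3 * Real.log 2 := by
    rw [show (8:ℝ) = 2 ^ 3 by norm_num, Real.log_pow]; push_cast; ring
  have e9 : Real.log 9 = 2 * Real.log 3 := by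
    rw [show (9:ℝ) = 3 ^ 2 by norm_num, Real.log_pow]; push_cast; ring
  linarith

lemma main_le (k : ℕ) :
    (Real.log ((2 + k : ℕ) : ℝ) - Real.log (((2 + k : ℕ) : ℝ) - 1)) /
        (Real.log (((2 + k : ℕ) : ℝ) + 1) - Real.log ((2 + k : ℕ) : ℝ)) ≤
      (Real.log (2 : ℝ) - Real.log (1 : ℝ)) /
        (Real.log (3 : ℝ) - Real.log (2 : ℝ)) := by
  induction k with
  | zero => push_cast; norm_num
  | succ n ih =>
    refine le_trans (le_of_lt ?_) ih
    have h := main_dec (2 + n) (by omega)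
    convert h using 2
    · rfl
    all_goals push_cast; ring_nf

/-- `g(x) = (ln x − ln(x−1))/(ln(x+1) − ln x)` is strictly decreasing on
integers `x ≥ 2` and satisfies `g(x) ≤ g(2) < 2`. -/
theorem stmt6 :
    (∀ x : ℕ, 2 ≤ x →
      (Real.log ((x : ℝ) + 1) - Real.log (x : ℝ)) /
          (Real.log ((x : ℝ) + 2) - Real.log ((x : ℝ) + 1)) <
        (Real.log (x : ℝ) - Real.log ((x : ℝ) - 1)) /
          (Real.log ((x : ℝ) + 1) - Real.log (x : ℝ))) ∧
    (∀ x : ℕ, 2 ≤ x →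
      (Real.log (x : ℝ) - Real.log ((x : ℝ) - 1)) /
          (Real.log ((x : ℝ) + 1) - Real.log (x : ℝ)) ≤
        (Real.log (2 : ℝ) - Real.log (1 : ℝ)) /
          (Real.log (3 : ℝ) - Real.log (2 : ℝ))) ∧
    (Real.log (2 : ℝ) - Real.log (1 : ℝ)) /
        (Real.log (3 : ℝ) - Real.log (2 : ℝ)) < 2 := by
  refine ⟨main_dec, ?_, g2_lt⟩
  intro x hx
  obtain ⟨k, rfl⟩ : ∃ k, x = 2 + k := ⟨x - 2, by omega⟩
  exact main_le k
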